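/- Let G and N be finite groups of the same order, let f : G → Aut(N) be a group homomorphism and g : G → N a bijective map satisfying g(στ) = g(σ)·f(σ)(g(τ)) for all σ, τ ∈ G. Let M be a characteristic subgroup of N. Then the preimage H = g⁻¹(M) is a subgroup of G, and E'(H,M) is non-empty: the restriction map σ ↦ f(σ)|_M is a group homomorphism H → Aut(M), the restriction of g to H is a bijection H → M, and together they satisfy g(στ) = g(σ)·(f(σ)|_M)(g(τ)) for all σ, τ ∈ H. -/
import Mathlib



private def restrictAut {N : Type*} [Group N] (M : Subgroup N)
    (hM : ∀ (φ : MulAut N) (x : N), x ∈ M ↔ φ x ∈ M) (φ : MulAut N) : M ≃* M where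
  toFun x := ⟨φ x, (hM φ x).mp x.2⟩
  invFun x := ⟨φ⁻¹ x, (hM φ⁻¹ x).mp x.2⟩
  left_inv x := by ext; simp
  right_inv x := by ext; simp
  map_mul' x y := by ext; simp

@[simp] private lemma restrictAut_coe {N : Type*} [Group N] (M : Subgroup N)
    (hM : ∀ (φ : MulAut N) (x : N), x ∈ M ↔ φ x ∈ M) (φ : MulAut N) (x : M) :
    ((restrictAut M hM φ x : M) : N) = φ (x : N) := rfl

/-- Let `G` and `N` be finite groups of the same order, let `f : G → Aut(N)` be a group
homomorphism and `g : G → N` a bijective map with `g (σ * τ) = g σ * f σ (g τ)` for all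
`σ τ : G`.  Let `M` be a characteristic subgroup of `N`.  Then the preimage
`H = g⁻¹(M)` is a subgroup of `G`, and `E'(H,M)` is non-empty: the restriction
`σ ↦ f σ |_M` is a group homomorphism `H → Aut(M)`, the restriction of `g` to `H` is a
bijection `H → M`, and together they satisfy the defining relation of `E'(H,M)`. -/
theorem preimage_of_characteristic_subgroup
    {G N : Type*} [Group G] [Group N] [Fintype G] [Fintype N]
    (hcard : Fintype.card G = Fintype.card N)
    (f : G →* MulAut N) (g : G → N) (hg : Function.Bijective g)
    (hfg : ∀ σ τ : G, g (σ * τ) = g σ * f σ (g τ))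
    (M : Subgroup N) [M.Characteristic] :
    ∃ H : Subgroup G, (H : Set G) = g ⁻¹' (M : Set N) ∧
      ∃ (F : H →* MulAut M) (g' : H → M),
        (∀ (σ : H) (x : M), ((F σ x : M) : N) = f (σ : G) (x : N)) ∧
        (∀ σ : H, ((g' σ : M) : N) = g (σ : G)) ∧
        Function.Bijective g' ∧
        ∀ σ τ : H, g' (σ * τ) = g' σ * F σ (g' τ) := by
  -- M is stable under all automorphisms
  have hM : ∀ (φ : MulAut N) (x : N), x ∈ M ↔ φ x ∈ M := by
    intro φ x
    have h := Subgroup.characteristic_iff_comap_eq.mp ‹M.Characteristic› φ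
    constructor
    · intro hx; rw [← h] at hx; exact hx
    · intro hx; rw [← h]; exact hx
  -- g 1 = 1
  have g1 : g 1 = 1 := by
    have h := hfg 1 1
    simp at h
    exact h
  have hinv : ∀ σ : G, g σ ∈ M → g σ⁻¹ ∈ M := by
    intro σ hσ
    have h := hfg σ σ⁻¹
    rw [mul_inv_cancel, g1] at h
    have hiv : f σ (g σ⁻¹) = (g σ)⁻¹ := eq_inv_of_mul_eq_one_right h.symm
    have hmem : f σ (g σ⁻¹) ∈ M := hiv ▸ M.inv_mem hσ
    exact (hM (f σ) (g σ⁻¹)).mpr hmem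
  refine ⟨{ carrier := g ⁻¹' (M : Set N)
            one_mem' := by simp only [Set.mem_preimage, g1]; exact M.one_mem
            mul_mem' := by
              intro a b ha hb
              simp only [Set.mem_preimage, SetLike.mem_coe] at *
              rw [hfg]
              exact M.mul_mem ha ((hM (f a) (g b)).mp hb)
            inv_mem' := by
              intro a ha
              simp only [Set.mem_preimage, SetLike.mem_coe] at *
              exact hinv a ha }, rfl, ?_⟩
  refine ⟨{ toFun := fun σ => restrictAut M hM (f (σ : G))
            map_one' := MulEquiv.ext fun x => Subtype.ext (by simp)
            map_mul' := fun a b => MulEquiv.ext fun x => Subtype.ext (by simp) },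
          fun σ => ⟨g σ, σ.2⟩, ?_, ?_, ?_, ?_⟩
  · intro σ x; rfl
  · intro σ; rfl
  · constructor
    · intro a b hab
      have h3 : g (a : G) = g (b : G) := congrArg Subtype.val hab
      exact Subtype.ext (hg.1 h3)
    · intro m
      obtain ⟨σ, hσ⟩ := hg.2 (m : N)
      have hσH : g σ ∈ M := hσ ▸ m.2
      exact ⟨⟨σ, hσH⟩, Subtype.ext hσ⟩
  · intro σ τ
    ext
    exact hfg σ τ
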